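/- Let W ≤ GL(V) be a nontrivial irreducible complex reflection group of rank n (dim V = n). Then the unweighted W-Laplacian is scalar: Σ_{τ ∈ R} (id_V − τ) = h·id_V in End(V), where h = (|R| + |R*|)/n is the Coxeter number of W. -/

import Mathlib

open scoped BigOperators

noncomputable section

namespace CD

variable {V : Type*} [AddCommGroup V] [Module ℂ V]

/-- A unitary reflection: an invertible linear map whose fixed space is a hyperplane. -/
def IsReflection (τ : (V →ₗ[ℂ] V)ˣ) : Prop :=
  Module.finrank ℂ V =
    Module.finrank ℂ (LinearMap.ker ((τ : V →ₗ[ℂ] V) - LinearMap.id)) + 1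

/-- The set of reflections of a subgroup `W ≤ GL(V)`. -/
def reflections (W : Subgroup (V →ₗ[ℂ] V)ˣ) : Set ((V →ₗ[ℂ] V)ˣ) :=
  {τ | τ ∈ W ∧ IsReflection τ}

/-- The set of reflecting hyperplanes of `W`. -/
def hyperplanes (W : Subgroup (V →ₗ[ℂ] V)ˣ) : Set (Submodule ℂ V) :=
  (fun τ : (V →ₗ[ℂ] V)ˣ => LinearMap.ker ((τ : V →ₗ[ℂ] V) - LinearMap.id)) '' reflections W

/-- `W` is a complex reflection group: a finite subgroup of `GL(V)` generated by
its reflections. -/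
def IsReflectionGroup (W : Subgroup (V →ₗ[ℂ] V)ˣ) : Prop :=
  (W : Set ((V →ₗ[ℂ] V)ˣ)).Finite ∧ Subgroup.closure (reflections W) = W

/-- `W` is irreducible: the only `W`-stable subspaces of `V` are `0` and `V`. -/
def IsIrreducible (W : Subgroup (V →ₗ[ℂ] V)ˣ) : Prop :=
  ∀ U : Submodule ℂ V, (∀ w ∈ W, ∀ v ∈ U, (w : V →ₗ[ℂ] V) v ∈ U) → U = ⊥ ∨ U = ⊤

/-- A regular vector: one lying on no reflecting hyperplane. -/
def IsRegular (W : Subgroup (V →ₗ[ℂ] V)ˣ) (v : V) : Prop :=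
  ∀ H ∈ hyperplanes W, v ∉ H

/-- A Coxeter element: an element of `W` with a regular eigenvector of
eigenvalue `exp(2πi/h)`. -/
def IsCoxeterElement (W : Subgroup (V →ₗ[ℂ] V)ˣ) (h : ℕ) (c : (V →ₗ[ℂ] V)ˣ) : Prop :=
  c ∈ W ∧ ∃ v : V, IsRegular W v ∧
    (c : V →ₗ[ℂ] V) v = Complex.exp (2 * Real.pi * Complex.I / (h : ℂ)) • v

/-- A flat: an intersection of reflecting hyperplanes (with `V` itself the empty
intersection). -/
def IsFlat (W : Subgroup (V →ₗ[ℂ] V)ˣ) (X : Submodule ℂ V) : Prop :=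
  ∃ S ⊆ hyperplanes W, X = sInf S

/-- The parabolic subgroup of `W` attached to a subspace `X`: the elements of `W`
fixing `X` pointwise. -/
def parabolic (W : Subgroup (V →ₗ[ℂ] V)ˣ) (X : Submodule ℂ V) :
    Subgroup (V →ₗ[ℂ] V)ˣ where
  carrier := {w | w ∈ W ∧ ∀ x ∈ X, (w : V →ₗ[ℂ] V) x = x}
  one_mem' := ⟨W.one_mem, fun _ _ => rfl⟩
  mul_mem' := by
    rintro a b ⟨ha, ha'⟩ ⟨hb, hb'⟩
    refine ⟨W.mul_mem ha hb, fun x hx => ?_⟩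
    have : ((a * b : (V →ₗ[ℂ] V)ˣ) : V →ₗ[ℂ] V) x
        = (a : V →ₗ[ℂ] V) ((b : V →ₗ[ℂ] V) x) := rfl
    rw [this, hb' x hx, ha' x hx]
  inv_mem' := by
    rintro a ⟨ha, ha'⟩
    refine ⟨W.inv_mem ha, fun x hx => ?_⟩
    conv_lhs => rw [← ha' x hx]
    have : ((a⁻¹ : (V →ₗ[ℂ] V)ˣ) : V →ₗ[ℂ] V) ((a : V →ₗ[ℂ] V) x)
        = (((a⁻¹ * a : (V →ₗ[ℂ] V)ˣ) : V →ₗ[ℂ] V)) x := rfl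
    rw [this, inv_mul_cancel]
    rfl

/-- A parabolic tower: a chain `{1} = W₀ ≤ W₁ ≤ ⋯ ≤ Wₙ = W` of parabolic subgroups
attached to a decreasing chain of flats `Xᵢ` with `codim Xᵢ = i`. -/
def IsParabolicTower (W : Subgroup (V →ₗ[ℂ] V)ˣ) (n : ℕ)
    (Wt : ℕ → Subgroup (V →ₗ[ℂ] V)ˣ) : Prop :=
  ∃ Xs : ℕ → Submodule ℂ V,
    (∀ i ≤ n, IsFlat W (Xs i)) ∧
    (∀ i ≤ n, Module.finrank ℂ V = Module.finrank ℂ (Xs i) + i) ∧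
    (∀ i, i < n → Xs (i + 1) ≤ Xs i) ∧
    (∀ i ≤ n, Wt i = parabolic W (Xs i)) ∧
    (∀ i, i < n → Wt i ≤ Wt (i + 1)) ∧
    Wt 0 = ⊥ ∧ Wt n = W

/-- The weighted Laplacian attached to a set of reflections and a weight function. -/
def lap (Rs : Set ((V →ₗ[ℂ] V)ˣ)) (wt : (V →ₗ[ℂ] V)ˣ → ℂ) : V →ₗ[ℂ] V :=
  ∑ᶠ τ ∈ Rs, wt τ • ((LinearMap.id : V →ₗ[ℂ] V) - (τ : V →ₗ[ℂ] V))


private lemma one_dim_endo {M : Type*} [AddCommGroup M] [Module ℂ M] [FiniteDimensional ℂ M]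
    (h1 : Module.finrank ℂ M = 1) (f : M →ₗ[ℂ] M) :
    f = LinearMap.trace ℂ M f • LinearMap.id := by
  obtain ⟨v, hv0, hv⟩ := finrank_eq_one_iff'.mp h1
  obtain ⟨c, hc⟩ := hv (f v)
  have hf : f = c • LinearMap.id := by
    ext w
    obtain ⟨a, ha⟩ := hv w
    rw [← ha]
    simp only [map_smul, ← hc, LinearMap.smul_apply, LinearMap.id_apply, smul_comm a c v]
  have htr : LinearMap.trace ℂ M f = c := by
    rw [hf, map_smul, LinearMap.trace_id, h1]
    simp
  rw [htr, hf]

private lemma trace_comp_one_dim {M : Type*} [AddCommGroup M] [Module ℂ M] [FiniteDimensional ℂ M]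
    (h1 : Module.finrank ℂ M = 1) (f g : M →ₗ[ℂ] M) :
    LinearMap.trace ℂ M (f ∘ₗ g) = LinearMap.trace ℂ M f * LinearMap.trace ℂ M g := by
  conv_lhs => rw [one_dim_endo h1 f, one_dim_endo h1 g]
  rw [LinearMap.smul_comp, LinearMap.comp_smul, LinearMap.id_comp, smul_smul, map_smul,
    LinearMap.trace_id, h1]
  simp

private lemma one_add_pow {R : Type*} [Ring R] (N : R) (hN : N * N = 0) :
    ∀ k : ℕ, (1 + N) ^ k = 1 + k • N := by
  intro k; induction k with
  | zero => simp
  | succ k ih =>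
    rw [pow_succ, ih, add_mul, mul_add, mul_add, one_mul, mul_one, smul_mul_assoc, hN,
      smul_zero, succ_nsmul]
    simp only [one_mul]
    abel

private lemma unit_eq_one_of_sq_zero (τ : (V →ₗ[ℂ] V)ˣ) (m : ℕ) (hm : m ≠ 0)
    (hord : τ ^ m = 1)
    (hN : ((τ : V →ₗ[ℂ] V) - 1) * ((τ : V →ₗ[ℂ] V) - 1) = 0) : τ = 1 := by
  have hτ : (τ : V →ₗ[ℂ] V) = 1 + ((τ : V →ₗ[ℂ] V) - 1) := by abel
  have h1 : ((τ : V →ₗ[ℂ] V)) ^ m = 1 := by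
    rw [← Units.val_pow_eq_pow_val, hord, Units.val_one]
  rw [hτ, one_add_pow _ hN m, add_eq_left] at h1
  have hN0 : ((m : ℂ)) • ((τ : V →ₗ[ℂ] V) - 1) = 0 := by
    rwa [Nat.cast_smul_eq_nsmul]
  rcases smul_eq_zero.mp hN0 with h | h
  · exact absurd (Nat.cast_eq_zero.mp h) hm
  · apply Units.ext
    rw [Units.val_one]
    exact sub_eq_zero.mp h

private def uEquiv (w : (V →ₗ[ℂ] V)ˣ) : V ≃ₗ[ℂ] V :=
  LinearEquiv.ofLinear (w : V →ₗ[ℂ] V) ((w⁻¹ : (V →ₗ[ℂ] V)ˣ) : V →ₗ[ℂ] V)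
    (by rw [← Module.End.mul_eq_comp, ← Units.val_mul, mul_inv_cancel, Units.val_one]; rfl)
    (by rw [← Module.End.mul_eq_comp, ← Units.val_mul, inv_mul_cancel, Units.val_one]; rfl)

private lemma uEquiv_apply (w : (V →ₗ[ℂ] V)ˣ) (y : V) :
    ((uEquiv w : V ≃ₗ[ℂ] V) : V →ₗ[ℂ] V) y = ((w : (V →ₗ[ℂ] V)ˣ) : V →ₗ[ℂ] V) y := rfl

private lemma winv_w (w : (V →ₗ[ℂ] V)ˣ) (y : V) :
    ((w⁻¹ : (V →ₗ[ℂ] V)ˣ) : V →ₗ[ℂ] V) (((w : (V →ₗ[ℂ] V)ˣ) : V →ₗ[ℂ] V) y) = y := by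
  rw [← Module.End.mul_apply, ← Units.val_mul, inv_mul_cancel, Units.val_one, Module.End.one_apply]

private lemma w_winv (w : (V →ₗ[ℂ] V)ˣ) (y : V) :
    ((w : (V →ₗ[ℂ] V)ˣ) : V →ₗ[ℂ] V) (((w⁻¹ : (V →ₗ[ℂ] V)ˣ) : V →ₗ[ℂ] V) y) = y := by
  rw [← Module.End.mul_apply, ← Units.val_mul, mul_inv_cancel, Units.val_one, Module.End.one_apply]

private lemma ker_conj (w τ : (V →ₗ[ℂ] V)ˣ) :
    LinearMap.ker (((w * τ * w⁻¹ : (V →ₗ[ℂ] V)ˣ) : V →ₗ[ℂ] V) - LinearMap.id)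
      = Submodule.map ((uEquiv w : V ≃ₗ[ℂ] V) : V →ₗ[ℂ] V)
          (LinearMap.ker ((τ : V →ₗ[ℂ] V) - LinearMap.id)) := by
  ext x
  simp only [LinearMap.mem_ker, Submodule.mem_map, LinearMap.sub_apply, LinearMap.id_apply,
    sub_eq_zero, Units.val_mul, Module.End.mul_apply]
  constructor
  · intro hx
    refine ⟨((w⁻¹ : (V →ₗ[ℂ] V)ˣ) : V →ₗ[ℂ] V) x, ?_, ?_⟩
    · have := congrArg (((w⁻¹ : (V →ₗ[ℂ] V)ˣ) : V →ₗ[ℂ] V)) hx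
      rwa [winv_w] at this
    · rw [uEquiv_apply, w_winv]
  · rintro ⟨y, hy, rfl⟩
    rw [uEquiv_apply, winv_w, hy]

private lemma trace_one_sub [FiniteDimensional ℂ V] {H : Submodule ℂ V}
    (hq : Module.finrank ℂ (V ⧸ H) = 1) (f : V →ₗ[ℂ] V)
    (hfix : ∀ x ∈ H, f x = x) (hstab : H ≤ Submodule.comap f H) :
    LinearMap.trace ℂ V (LinearMap.id - f)
      = 1 - LinearMap.trace ℂ (V ⧸ H) (H.mapQ H f hstab) := by
  have hker : H ≤ LinearMap.ker (LinearMap.id - f) := by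
    intro x hx
    simp [LinearMap.mem_ker, hfix x hx]
  have h1 : (LinearMap.id - f) = (H.liftQ (LinearMap.id - f) hker) ∘ₗ H.mkQ :=
    (H.liftQ_mkQ _ _).symm
  rw [h1, LinearMap.trace_comp_comm']
  have h2 : H.mkQ ∘ₗ (H.liftQ (LinearMap.id - f) hker) = LinearMap.id - H.mapQ H f hstab := by
    apply H.linearMap_qext
    ext v
    simp [Submodule.mapQ_apply, Submodule.liftQ_apply, map_sub]
  rw [h2, map_sub, LinearMap.trace_id, hq]
  norm_num

private lemma fiber_sum [FiniteDimensional ℂ V] {W : Subgroup (V →ₗ[ℂ] V)ˣ}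
    (hWfin : ((W : Set ((V →ₗ[ℂ] V)ˣ))).Finite)
    {H : Submodule ℂ V} (hH : H ∈ hyperplanes W)
    (F : Finset ((V →ₗ[ℂ] V)ˣ))
    (hF : ∀ τ, τ ∈ F ↔ τ ∈ reflections W ∧ LinearMap.ker ((τ : V →ₗ[ℂ] V) - LinearMap.id) = H) :
    ∑ τ ∈ F, LinearMap.trace ℂ V (LinearMap.id - (τ : V →ₗ[ℂ] V)) = (F.card : ℂ) + 1 := by
  classical
  obtain ⟨τH, hτHr, hτHk⟩ := hH
  have hfrH : Module.finrank ℂ V = Module.finrank ℂ H + 1 := by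
    rw [← hτHk]; exact hτHr.2
  have hq0 : Module.finrank ℂ (V ⧸ H) = 1 := by
    have := Submodule.finrank_quotient_add_finrank H
    omega
  have hone_not : (1 : (V →ₗ[ℂ] V)ˣ) ∉ reflections W := by
    rintro ⟨-, h1⟩
    unfold IsReflection at h1
    rw [Units.val_one, show ((1 : V →ₗ[ℂ] V) - LinearMap.id) = 0 from sub_self _,
      LinearMap.ker_zero, finrank_top] at h1
    omega
  have h1F : (1 : (V →ₗ[ℂ] V)ˣ) ∉ F := fun hmem => hone_not ((hF _).mp hmem).1
  set P : Finset ((V →ₗ[ℂ] V)ˣ) := insert (1 : (V →ₗ[ℂ] V)ˣ) F with hP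
  have hPmem : ∀ τ, τ ∈ P ↔ τ ∈ W ∧ ∀ x ∈ H, (τ : V →ₗ[ℂ] V) x = x := by
    intro τ
    constructor
    · intro hτ
      rcases Finset.mem_insert.mp hτ with rfl | hτF
      · exact ⟨W.one_mem, fun x _ => by rw [Units.val_one]; rfl⟩
      · obtain ⟨hr, hk⟩ := (hF τ).mp hτF
        refine ⟨hr.1, fun x hx => ?_⟩
        rw [← hk] at hx
        have := LinearMap.mem_ker.mp hx
        rwa [LinearMap.sub_apply, LinearMap.id_apply, sub_eq_zero] at this
    · rintro ⟨hτW, hτfix⟩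
      by_cases hτ1 : τ = 1
      · exact hτ1 ▸ Finset.mem_insert_self _ _
      · apply Finset.mem_insert_of_mem
        rw [hF]
        have hkerne : LinearMap.ker ((τ : V →ₗ[ℂ] V) - LinearMap.id) ≠ ⊤ := by
          intro htop
          rw [LinearMap.ker_eq_top, sub_eq_zero] at htop
          exact hτ1 (Units.ext (by rw [htop]; rfl))
        have hle : H ≤ LinearMap.ker ((τ : V →ₗ[ℂ] V) - LinearMap.id) := by
          intro x hx
          rw [LinearMap.mem_ker, LinearMap.sub_apply, LinearMap.id_apply, sub_eq_zero]
          exact hτfix x hx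
        have hlt := Submodule.finrank_lt (K := ℂ) (V := V) hkerne
        have hker_eq : LinearMap.ker ((τ : V →ₗ[ℂ] V) - LinearMap.id) = H :=
          (Submodule.eq_of_le_of_finrank_le hle (by omega)).symm
        exact ⟨⟨hτW, by unfold IsReflection; rw [hker_eq]; exact hfrH⟩, hker_eq⟩
  have hmulP : ∀ σ ∈ P, ∀ τ ∈ P, σ * τ ∈ P := by
    intro σ hσ τ hτ
    obtain ⟨hσW, hσf⟩ := (hPmem σ).mp hσ
    obtain ⟨hτW, hτf⟩ := (hPmem τ).mp hτ
    refine (hPmem _).mpr ⟨W.mul_mem hσW hτW, fun x hx => ?_⟩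
    rw [Units.val_mul, Module.End.mul_apply, hτf x hx, hσf x hx]
  have hinvP : ∀ τ ∈ P, τ⁻¹ ∈ P := by
    intro τ hτ
    obtain ⟨hτW, hτf⟩ := (hPmem τ).mp hτ
    refine (hPmem _).mpr ⟨W.inv_mem hτW, fun x hx => ?_⟩
    conv_lhs => rw [← hτf x hx]
    exact winv_w τ x
  have hstab : ∀ τ ∈ P, H ≤ Submodule.comap ((τ : (V →ₗ[ℂ] V)ˣ) : V →ₗ[ℂ] V) H := by
    intro τ hτ x hx
    rw [Submodule.mem_comap, ((hPmem τ).mp hτ).2 x hx]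
    exact hx
  set q : (V →ₗ[ℂ] V)ˣ → ℂ :=
    fun τ => 1 - LinearMap.trace ℂ V (LinearMap.id - (τ : V →ₗ[ℂ] V)) with hqdef
  have hqbar : ∀ τ (hτ : τ ∈ P),
      q τ = LinearMap.trace ℂ (V ⧸ H) (H.mapQ H ((τ : V →ₗ[ℂ] V)) (hstab τ hτ)) := by
    intro τ hτ
    rw [hqdef]
    simp only []
    rw [trace_one_sub hq0 _ ((hPmem τ).mp hτ).2 (hstab τ hτ)]
    ring
  have hqmul : ∀ σ ∈ P, ∀ τ ∈ P, q (σ * τ) = q σ * q τ := by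
    intro σ hσ τ hτ
    have hστ := hmulP σ hσ τ hτ
    rw [hqbar _ hστ, hqbar _ hσ, hqbar _ hτ, ← trace_comp_one_dim hq0]
    have heq : H.mapQ H (((σ * τ : (V →ₗ[ℂ] V)ˣ)) : V →ₗ[ℂ] V) (hstab _ hστ)
        = (H.mapQ H ((σ : V →ₗ[ℂ] V)) (hstab σ hσ)) ∘ₗ
          (H.mapQ H ((τ : V →ₗ[ℂ] V)) (hstab τ hτ)) := by
      apply H.linearMap_qext
      ext v
      simp [Submodule.mapQ_apply, Units.val_mul]
    rw [heq]
  have hτHF : τH ∈ F := (hF τH).mpr ⟨hτHr, hτHk⟩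
  have hτH1 : τH ≠ 1 := fun hcon => hone_not (hcon ▸ hτHr)
  have hτHP : τH ∈ P := Finset.mem_insert_of_mem hτHF
  have hq1 : q τH ≠ 1 := by
    intro hq1
    apply hτH1
    have hbar := one_dim_endo hq0 (H.mapQ H ((τH : V →ₗ[ℂ] V)) (hstab τH hτHP))
    rw [← hqbar τH hτHP, hq1, one_smul] at hbar
    have hmem : ∀ v : V, (τH : V →ₗ[ℂ] V) v - v ∈ H := by
      intro v
      have hv := congrArg (fun g : V ⧸ H →ₗ[ℂ] V ⧸ H => g (Submodule.Quotient.mk v)) hbar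
      simp only [Submodule.mapQ_apply, LinearMap.id_apply] at hv
      exact (Submodule.Quotient.eq H).mp hv
    have hfix := ((hPmem τH).mp hτHP).2
    have hNsq : (((τH : V →ₗ[ℂ] V)) - 1) * (((τH : V →ₗ[ℂ] V)) - 1) = 0 := by
      ext v
      simp only [Module.End.mul_apply, LinearMap.sub_apply, Module.End.one_apply,
        LinearMap.zero_apply]
      rw [hfix _ (hmem v), sub_self]
    have : Finite (W : Set ((V →ₗ[ℂ] V)ˣ)) := hWfin.to_subtype
    have hcard : τH ^ (Nat.card W) = 1 := by
      have hpow := pow_card_eq_one' (x := (⟨τH, hτHr.1⟩ : W))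
      have h2 := congrArg (fun x : W => (x : (V →ₗ[ℂ] V)ˣ)) hpow
      simp only [SubmonoidClass.coe_pow, OneMemClass.coe_one] at h2
      exact h2
    have hm0 : Nat.card W ≠ 0 := Nat.card_pos.ne'
    exact unit_eq_one_of_sq_zero τH _ hm0 hcard hNsq
  have hsum0 : ∑ τ ∈ P, q τ = 0 := by
    have hre : ∑ τ ∈ P, q τ = ∑ τ ∈ P, q (τH * τ) := by
      refine Finset.sum_nbij' (fun τ => τH⁻¹ * τ) (fun τ => τH * τ) ?_ ?_ ?_ ?_ ?_
      · intro a ha; exact hmulP _ (hinvP τH hτHP) _ ha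
      · intro a ha; exact hmulP _ hτHP _ ha
      · intro a _; group
      · intro a _; group
      · intro a _
        congr 1
        group
    have hfac : ∑ τ ∈ P, q (τH * τ) = q τH * ∑ τ ∈ P, q τ := by
      rw [Finset.mul_sum]
      exact Finset.sum_congr rfl (fun τ hτ => hqmul τH hτHP τ hτ)
    have hS := hre.trans hfac
    have h0 : (q τH - 1) * ∑ τ ∈ P, q τ = 0 := by
      rw [sub_mul, one_mul, ← hS, sub_self]
    rcases mul_eq_zero.mp h0 with hcase | hcase
    · exact absurd (sub_eq_zero.mp hcase) hq1
    · exact hcase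
  have hPsum : ∑ τ ∈ P, LinearMap.trace ℂ V (LinearMap.id - (τ : V →ₗ[ℂ] V)) = (P.card : ℂ) := by
    have hcg : ∀ τ ∈ P, LinearMap.trace ℂ V (LinearMap.id - (τ : V →ₗ[ℂ] V)) = 1 - q τ := by
      intro τ _
      rw [hqdef]
      ring
    rw [Finset.sum_congr rfl hcg, Finset.sum_sub_distrib, hsum0, sub_zero, Finset.sum_const]
    simp
  rw [hP, Finset.sum_insert h1F] at hPsum
  have h10 : LinearMap.trace ℂ V (LinearMap.id - ((1 : (V →ₗ[ℂ] V)ˣ) : V →ₗ[ℂ] V)) = 0 := by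
    rw [Units.val_one, show ((LinearMap.id : V →ₗ[ℂ] V) - 1) = 0 from sub_self _, map_zero]
  rw [h10, zero_add] at hPsum
  rw [hPsum, Finset.card_insert_of_notMem h1F]
  push_cast
  ring

/-- For a nontrivial irreducible complex reflection group `W` of
rank `n = dim V`, the unweighted `W`-Laplacian `∑_{τ ∈ R} (id - τ)` is scalar
multiplication by the Coxeter number `h = (|R| + |R*|)/n`. -/
theorem unweighted_laplacian_is_coxeter_number_scalar
    [FiniteDimensional ℂ V] (n : ℕ) (hn : Module.finrank ℂ V = n)
    (W : Subgroup (V →ₗ[ℂ] V)ˣ)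
    (hW : IsReflectionGroup W) (hnontrivial : W ≠ ⊥) (hirr : IsIrreducible W)
    (h : ℕ) (hh : h * n = (reflections W).ncard + (hyperplanes W).ncard) :
    (∑ᶠ τ ∈ reflections W, ((LinearMap.id : V →ₗ[ℂ] V) - (τ : (V →ₗ[ℂ] V)ˣ)))
      = (h : ℂ) • (LinearMap.id : V →ₗ[ℂ] V) := by
  classical
  have hVnt : Nontrivial V := by
    by_contra hcon
    rw [not_nontrivial_iff_subsingleton] at hcon
    apply hnontrivial
    ext x
    simp only [Subgroup.mem_bot]
    constructor
    · intro _
      apply Units.ext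
      apply LinearMap.ext
      intro v
      exact Subsingleton.elim _ _
    · intro hx
      rw [hx]
      exact W.one_mem
  have hnpos : 0 < n := hn ▸ Module.finrank_pos
  have hRset : reflections W ⊆ (W : Set ((V →ₗ[ℂ] V)ˣ)) := fun τ hτ => hτ.1
  have hRfin : (reflections W).Finite := hW.1.subset hRset
  have hHfin : (hyperplanes W).Finite := hRfin.image _
  set Rfin := hRfin.toFinset with hRdef
  set Hfin := hHfin.toFinset with hHdef
  have hconj : ∀ w ∈ W, ∀ τ, τ ∈ reflections W → w * τ * w⁻¹ ∈ reflections W := by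
    intro w hw τ hτ
    refine ⟨W.mul_mem (W.mul_mem hw hτ.1) (W.inv_mem hw), ?_⟩
    unfold IsReflection
    rw [ker_conj, LinearEquiv.finrank_map_eq]
    exact hτ.2
  set L : V →ₗ[ℂ] V := ∑ τ ∈ Rfin, (LinearMap.id - ((τ : (V →ₗ[ℂ] V)ˣ) : V →ₗ[ℂ] V)) with hL
  have hgoal_eq : (∑ᶠ τ ∈ reflections W,
      ((LinearMap.id : V →ₗ[ℂ] V) - ((τ : (V →ₗ[ℂ] V)ˣ) : V →ₗ[ℂ] V))) = L := by
    rw [← hRfin.coe_toFinset, finsum_mem_coe_finset]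
  have hcomm : ∀ w ∈ W, ((w : (V →ₗ[ℂ] V)ˣ) : V →ₗ[ℂ] V) * L = L * ((w : (V →ₗ[ℂ] V)ˣ) : V →ₗ[ℂ] V) := by
    intro w hw
    rw [hL, Finset.mul_sum, Finset.sum_mul]
    refine Finset.sum_nbij' (fun τ => w * τ * w⁻¹) (fun τ => w⁻¹ * τ * w) ?_ ?_ ?_ ?_ ?_
    · intro τ hτ
      rw [hRdef, Set.Finite.mem_toFinset] at *
      exact hconj w hw τ hτ
    · intro τ hτ
      rw [hRdef, Set.Finite.mem_toFinset] at *
      have := hconj w⁻¹ (W.inv_mem hw) τ hτ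
      rwa [inv_inv] at this
    · intro a _; group
    · intro a _; group
    · intro τ _
      have key : ((w * τ * w⁻¹ : (V →ₗ[ℂ] V)ˣ) : V →ₗ[ℂ] V) * (w : V →ₗ[ℂ] V)
          = (w : V →ₗ[ℂ] V) * (τ : V →ₗ[ℂ] V) := by
        rw [← Units.val_mul, ← Units.val_mul w τ]
        congr 1
        group
      have hid : (LinearMap.id : V →ₗ[ℂ] V) = 1 := rfl
      rw [hid, mul_sub, sub_mul, one_mul, mul_one, key]
  obtain ⟨μ, hμ⟩ := Module.End.exists_eigenvalue (L : Module.End ℂ V)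
  have hE : Module.End.eigenspace (L : Module.End ℂ V) μ ≠ ⊥ := Module.End.hasEigenvalue_iff.mp hμ
  have hstable : ∀ w ∈ W, ∀ v ∈ Module.End.eigenspace (L : Module.End ℂ V) μ,
      ((w : (V →ₗ[ℂ] V)ˣ) : V →ₗ[ℂ] V) v ∈ Module.End.eigenspace (L : Module.End ℂ V) μ := by
    intro w hw v hv
    rw [Module.End.mem_eigenspace_iff] at hv ⊢
    have happ := congrArg (fun g : V →ₗ[ℂ] V => g v) (hcomm w hw)
    simp only [Module.End.mul_apply] at happ
    rw [← happ, hv, map_smul]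
  have hEtop := (hirr _ hstable).resolve_left hE
  have hLid : L = μ • LinearMap.id := by
    ext v
    have hv : v ∈ Module.End.eigenspace (L : Module.End ℂ V) μ := by
      rw [hEtop]; trivial
    rw [Module.End.mem_eigenspace_iff] at hv
    simpa using hv
  have htr1 : LinearMap.trace ℂ V L = μ * n := by
    rw [hLid, map_smul, LinearMap.trace_id, hn]
    simp [smul_eq_mul]
  have hmaps : ∀ τ ∈ Rfin,
      (LinearMap.ker (((τ : (V →ₗ[ℂ] V)ˣ) : V →ₗ[ℂ] V) - LinearMap.id)) ∈ Hfin := by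
    intro τ hτ
    rw [hRdef, Set.Finite.mem_toFinset] at hτ
    rw [hHdef, Set.Finite.mem_toFinset]
    exact ⟨τ, hτ, rfl⟩
  have htr2 : LinearMap.trace ℂ V L
      = ∑ H ∈ Hfin, ∑ τ ∈ Rfin.filter
          (fun τ => LinearMap.ker (((τ : (V →ₗ[ℂ] V)ˣ) : V →ₗ[ℂ] V) - LinearMap.id) = H),
          LinearMap.trace ℂ V (LinearMap.id - ((τ : (V →ₗ[ℂ] V)ˣ) : V →ₗ[ℂ] V)) := by
    rw [hL, map_sum, Finset.sum_fiberwise_of_maps_to hmaps]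
  have hfiber : ∀ H ∈ Hfin, ∑ τ ∈ Rfin.filter
          (fun τ => LinearMap.ker (((τ : (V →ₗ[ℂ] V)ˣ) : V →ₗ[ℂ] V) - LinearMap.id) = H),
          LinearMap.trace ℂ V (LinearMap.id - ((τ : (V →ₗ[ℂ] V)ˣ) : V →ₗ[ℂ] V))
        = ((Rfin.filter
          (fun τ => LinearMap.ker (((τ : (V →ₗ[ℂ] V)ˣ) : V →ₗ[ℂ] V) - LinearMap.id) = H)).card : ℂ)
          + 1 := by
    intro H hH
    rw [hHdef, Set.Finite.mem_toFinset] at hH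
    refine fiber_sum hW.1 hH _ (fun τ => ?_)
    rw [Finset.mem_filter, hRdef, Set.Finite.mem_toFinset]
  have hcount : LinearMap.trace ℂ V L
      = (((reflections W).ncard + (hyperplanes W).ncard : ℕ) : ℂ) := by
    rw [htr2, Finset.sum_congr rfl hfiber, Finset.sum_add_distrib, Finset.sum_const,
      ← Nat.cast_sum, ← Finset.card_eq_sum_card_fiberwise hmaps,
      Set.ncard_eq_toFinset_card _ hRfin, Set.ncard_eq_toFinset_card _ hHfin]
    push_cast
    ring
  have hμh : μ = (h : ℂ) := by
    have hmuln : μ * (n : ℂ) = (h : ℂ) * (n : ℂ) := by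
      rw [← htr1, hcount, ← hh]
      push_cast
      ring
    exact mul_right_cancel₀ (Nat.cast_ne_zero.mpr hnpos.ne') hmuln
  rw [hgoal_eq, hLid, hμh]

end CD
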